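/- Let (X,d) be a metric space, μ a Borel measure on X, f:X→[0,∞) μ-measurable, x∈X and R>0. Let α∈(0,1), set c := 4√π · α^{−1}(1−α)^{−1/2} and δ := α²(1−α)/(144π). Assume: (i) r ↦ V(x,r) is continuous and positive on (0,R]; (ii) V(x,r)/r² → π as r→0⁺; and (iii) for every r∈(0,R], V(x,r)^{1/2} ≤ c·( D⁺V(x,·)(r) + ∫_{B(x,r)} f dμ ). Then at least one of the following holds: (1) sup_{r∈(0,R]} r^{−1} ∫_{B(x,r)} f dμ ≥ δ; (2) inf_{r∈(0,R]} V(x,r)/r² > δ. (This is the m=2 case of the paper's Lemma 2.1 with the explicit choice δ = α²(1−α)/(144π).) -/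

import Mathlib

open MeasureTheory Filter Set Real

private lemma aux_growth (δ : ℝ) (V : ℝ → ℝ) {a b : ℝ} (hab : a ≤ b)
    (hcont : ContinuousOn V (Set.Icc a b))
    (hlb : ∀ r ∈ Set.Ico a b, ∀ᶠ s in nhdsWithin (0:ℝ) (Set.Ioi 0),
      0 ≤ (V (r+s) - V r)/s)
    (hder : ∀ r ∈ Set.Ico a b,
      2*δ*r < Filter.liminf (fun s => (V (r+s) - V r)/s) (nhdsWithin (0:ℝ) (Set.Ioi 0))) :
    V a + δ*(b^2 - a^2) ≤ V b := by
  have key := image_le_of_liminf_slope_right_le_deriv_boundary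
    (f := fun r => -V r) (a := a) (b := b)
    (B := fun r => -V a - δ*(r^2 - a^2)) (B' := fun r => -(2*δ*r))
    hcont.neg (by simp)
    (by fun_prop)
    (by
      intro y hy
      have h : HasDerivAt (fun r : ℝ => -V a - δ*(r^2 - a^2)) (-(2*δ*y)) y := by
        have h1 : HasDerivAt (fun r : ℝ => r^2 - a^2) (2*y) y := by
          simpa using ((hasDerivAt_pow 2 y).sub_const (a^2))
        have := (h1.const_mul δ).const_sub (-V a)
        rw [show -(2*δ*y) = -(δ*(2*y)) by ring]; exact this
      exact h.hasDerivWithinAt)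
    ?_
  · have h := key (right_mem_Icc.2 hab)
    simp only [neg_le_sub_iff_le_add] at h
    linarith [h]
  · intro y hy r hr
    have hL := hder y hy
    have hbdd : (nhdsWithin (0:ℝ) (Set.Ioi 0)).IsBoundedUnder (· ≥ ·)
        (fun s => (V (y+s) - V y)/s) :=
      ⟨0, eventually_map.2 ((hlb y hy).mono fun s hs => hs)⟩
    have hrr : -r < 2*δ*y := by linarith
    have hev : ∀ᶠ s in nhdsWithin (0:ℝ) (Set.Ioi 0), -r < (V (y+s) - V y)/s :=
      eventually_lt_of_lt_liminf (hrr.trans hL) hbdd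
    have hmap : Filter.map (fun s : ℝ => y + s) (nhdsWithin (0:ℝ) (Set.Ioi 0))
        = nhdsWithin y (Set.Ioi y) := by
      have := (Homeomorph.addLeft y).isEmbedding.map_nhdsWithin_eq (Set.Ioi 0) 0
      simpa [image_const_add_Ioi] using this
    rw [show (nhdsWithin y (Set.Ioi y)) = _ from hmap.symm, frequently_map]
    refine hev.frequently.mono fun s hs => ?_
    have : slope (fun r => -V r) y (y + s) = -((V (y+s) - V y)/s) := by
      rw [slope_def_field]
      simp only [add_sub_cancel_left]
      ring
    rw [this]
    linarith

set_option maxHeartbeats 1000000 in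
theorem maximal_function_or_volume_ratio_surface
    {X : Type*} [MetricSpace X] [MeasurableSpace X] [BorelSpace X]
    (μ : Measure X)
    (f : X → ℝ) (hf0 : ∀ x, 0 ≤ f x) (hfmeas : Measurable f)
    (x : X) (R : ℝ) (hR : 0 < R)
    (α : ℝ) (hα : α ∈ Set.Ioo (0 : ℝ) 1)
    (hVcont : ContinuousOn (fun r : ℝ => (μ (Metric.ball x r)).toReal) (Set.Ioc 0 R))
    (hVpos : ∀ r ∈ Set.Ioc (0 : ℝ) R, 0 < (μ (Metric.ball x r)).toReal)
    (hVlim : Tendsto (fun r : ℝ => (μ (Metric.ball x r)).toReal / r ^ 2)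
      (nhdsWithin 0 (Set.Ioi 0)) (nhds π))
    (hSob : ∀ r ∈ Set.Ioc (0 : ℝ) R,
      (μ (Metric.ball x r)).toReal ^ ((1 : ℝ) / 2) ≤
        (4 * Real.sqrt π * α⁻¹ * (1 - α) ^ (-(1 / 2 : ℝ))) *
          (Filter.liminf
            (fun s : ℝ =>
              ((μ (Metric.ball x (r + s))).toReal - (μ (Metric.ball x r)).toReal) / s)
            (nhdsWithin 0 (Set.Ioi 0))
          + ∫ y in Metric.ball x r, f y ∂μ)) :
    (∃ r ∈ Set.Ioc (0 : ℝ) R,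
        α ^ 2 * (1 - α) / (144 * π) ≤ r⁻¹ * ∫ y in Metric.ball x r, f y ∂μ) ∨
      α ^ 2 * (1 - α) / (144 * π) <
        sInf {v : ℝ | ∃ r ∈ Set.Ioc (0 : ℝ) R,
          v = (μ (Metric.ball x r)).toReal / r ^ 2} := by
  obtain ⟨hα0, hα1⟩ := hα
  by_cases h1 : ∃ r ∈ Set.Ioc (0:ℝ) R,
      α ^ 2 * (1 - α) / (144 * π) ≤ r⁻¹ * ∫ y in Metric.ball x r, f y ∂μ
  · exact Or.inl h1
  right
  push_neg at h1
  set c := 4 * Real.sqrt π * α⁻¹ * (1 - α) ^ (-(1 / 2 : ℝ)) with hcdef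
  set δ := α ^ 2 * (1 - α) / (144 * π) with hδdef
  have hπ := Real.pi_pos
  have h1α : (0:ℝ) < 1 - α := by linarith
  have hδpos : 0 < δ := by rw [hδdef]; positivity
  have hδ144 : δ * (144 * π) = α ^ 2 * (1 - α) := by
    rw [hδdef]; field_simp
  have hprod : α ^ 2 * (1 - α) < 1 := by nlinarith
  have h2δ : 2*δ < π/2 := by nlinarith [Real.pi_gt_three]
  have hδhalf : δ < π/2 := by linarith
  have hceq : c = 4 * Real.sqrt π * α⁻¹ * (Real.sqrt (1-α))⁻¹ := by
    rw [hcdef, Real.rpow_neg h1α.le, ← Real.sqrt_eq_rpow]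
  have hsqrtπ : 0 < Real.sqrt π := Real.sqrt_pos.2 hπ
  have hsqrt1α : 0 < Real.sqrt (1-α) := Real.sqrt_pos.2 h1α
  have hcpos : 0 < c := by
    rw [hceq]
    exact mul_pos (mul_pos (mul_pos four_pos hsqrtπ) (inv_pos.2 hα0)) (inv_pos.2 hsqrt1α)
  have hπsq : Real.sqrt π * Real.sqrt π = π := Real.mul_self_sqrt hπ.le
  have h1αsq : Real.sqrt (1-α) * Real.sqrt (1-α) = 1-α := Real.mul_self_sqrt h1α.le
  have hc2 : 9 * δ * c^2 = 1 := by
    rw [hceq, hδdef]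
    field_simp
    linear_combination (144*(1-α))*hπsq - (144*π)*h1αsq
  -- finiteness of the measure of balls of radius ≤ R
  have hfin : ∀ t ∈ Set.Ioc (0:ℝ) R, μ (Metric.ball x t) ≠ ⊤ := by
    intro t ht htop
    have := hVpos t ht
    rw [htop] at this
    simp at this
  -- monotonicity of difference quotients
  have hmono : ∀ r : ℝ, 0 < r → r < R → ∀ᶠ s in nhdsWithin (0:ℝ) (Set.Ioi 0),
      0 ≤ ((μ (Metric.ball x (r + s))).toReal - (μ (Metric.ball x r)).toReal) / s := by
    intro r hr hrR
    filter_upwards [Ioo_mem_nhdsGT_of_mem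
      (show (0:ℝ) ∈ Set.Ico (0:ℝ) (R - r) from ⟨le_rfl, by linarith⟩)] with s hs
    have hmem : r + s ∈ Set.Ioc (0:ℝ) R := ⟨by linarith [hs.1], by linarith [hs.2]⟩
    have hle : (μ (Metric.ball x r)).toReal ≤ (μ (Metric.ball x (r + s))).toReal :=
      ENNReal.toReal_mono (hfin _ hmem)
        (measure_mono (Metric.ball_subset_ball (by linarith [hs.1])))
    exact div_nonneg (by linarith) hs.1.le
  -- key derivative lower bound
  have hkey : ∀ r ∈ Set.Ioc (0:ℝ) R, δ * r^2 ≤ (μ (Metric.ball x r)).toReal →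
      2*δ*r < Filter.liminf
        (fun s : ℝ =>
          ((μ (Metric.ball x (r + s))).toReal - (μ (Metric.ball x r)).toReal) / s)
        (nhdsWithin (0:ℝ) (Set.Ioi 0)) := by
    intro r hr hVr
    set L := Filter.liminf
        (fun s : ℝ =>
          ((μ (Metric.ball x (r + s))).toReal - (μ (Metric.ball x r)).toReal) / s)
        (nhdsWithin (0:ℝ) (Set.Ioi 0)) with hLdef
    set I := ∫ y in Metric.ball x r, f y ∂μ with hIdef
    have hI : I < δ * r := by
      have := h1 r hr
      rw [inv_mul_lt_iff₀ hr.1] at this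
      linarith [this]
    have hS := hSob r hr
    have hv2 : (μ (Metric.ball x r)).toReal ^ ((1:ℝ)/2)
        = Real.sqrt ((μ (Metric.ball x r)).toReal) := (Real.sqrt_eq_rpow _).symm
    rw [hv2] at hS
    have hsnn : 0 ≤ Real.sqrt ((μ (Metric.ball x r)).toReal) := Real.sqrt_nonneg _
    have h0LI : 0 ≤ L + I := by nlinarith [hsnn.trans hS, hcpos]
    have hVle : (μ (Metric.ball x r)).toReal ≤ (c*(L+I))^2 := by
      have h2 := pow_le_pow_left₀ hsnn hS 2
      rwa [Real.sq_sqrt ENNReal.toReal_nonneg] at h2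
    have hsq : (3*δ*r)^2 ≤ (L+I)^2 := by
      calc (3*δ*r)^2 = 9*δ*(δ*r^2) := by ring
        _ ≤ 9*δ*((c*(L+I))^2) :=
            mul_le_mul_of_nonneg_left (hVr.trans hVle) (by linarith)
        _ = (9*δ*c^2) * (L+I)^2 := by ring
        _ = (L+I)^2 := by rw [hc2]; ring
    have h3 : 3*δ*r ≤ L + I := by
      have := Real.sqrt_le_sqrt hsq
      rwa [Real.sqrt_sq (by nlinarith [hδpos, hr.1] : (0:ℝ) ≤ 3*δ*r),
        Real.sqrt_sq h0LI] at this
    linarith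
  -- near zero the volume ratio exceeds π/2
  have hhalf : ∀ᶠ r in nhdsWithin (0:ℝ) (Set.Ioi 0),
      π/2 < (μ (Metric.ball x r)).toReal / r^2 :=
    hVlim.eventually (eventually_gt_nhds (by linarith))
  rw [eventually_nhdsWithin_iff, Metric.eventually_nhds_iff] at hhalf
  obtain ⟨ε, hε, hball⟩ := hhalf
  set η := min (ε/2) R with hηdef
  have hη0 : 0 < η := lt_min (by linarith) hR
  have hηR : η ≤ R := min_le_right _ _
  have hηhalf : ∀ r : ℝ, 0 < r → r ≤ η → π/2 < (μ (Metric.ball x r)).toReal / r^2 := by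
    intro r hr hrη
    refine hball ?_ (Set.mem_Ioi.2 hr)
    rw [Real.dist_eq, sub_zero, abs_of_pos hr]
    have : η ≤ ε/2 := min_le_left _ _
    linarith
  -- pointwise bound: δ r² < V r on (0, R]
  have hpt : ∀ r ∈ Set.Ioc (0:ℝ) R, δ * r^2 < (μ (Metric.ball x r)).toReal := by
    intro r₀ hr₀
    by_contra hcon
    push_neg at hcon
    have hηr₀ : η < r₀ := by
      by_contra hle
      push_neg at hle
      have h := hηhalf r₀ hr₀.1 hle
      rw [lt_div_iff₀ (pow_pos hr₀.1 2)] at h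
      nlinarith [mul_pos (show (0:ℝ) < π/2 - δ by linarith) (pow_pos hr₀.1 2)]
    set T := Set.Icc η r₀ ∩ (fun r : ℝ => (μ (Metric.ball x r)).toReal - δ*r^2) ⁻¹' Set.Iic 0
      with hTdef
    have hr₀T : r₀ ∈ T := ⟨⟨hηr₀.le, le_rfl⟩, by simp [Set.mem_Iic]; linarith⟩
    have hTbdd : BddBelow T := ⟨η, fun t ht => ht.1.1⟩
    have hTsub : Set.Icc η r₀ ⊆ Set.Ioc (0:ℝ) R :=
      fun t ht => ⟨lt_of_lt_of_le hη0 ht.1, le_trans ht.2 hr₀.2⟩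
    have hTclosed : IsClosed T := by
      apply ContinuousOn.preimage_isClosed_of_isClosed
        ((hVcont.mono hTsub).sub (by fun_prop)) isClosed_Icc isClosed_Iic
    set r₂ := sInf T with hr₂def
    have hr₂T : r₂ ∈ T := hTclosed.csInf_mem ⟨r₀, hr₀T⟩ hTbdd
    have hηr₂ : η ≤ r₂ := hr₂T.1.1
    have hr₂r₀ : r₂ ≤ r₀ := hr₂T.1.2
    have hVr₂ : (μ (Metric.ball x r₂)).toReal ≤ δ * r₂^2 := by
      have := hr₂T.2
      simp only [Set.mem_preimage, Set.mem_Iic] at this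
      linarith
    have hbelow : ∀ r : ℝ, 0 < r → r < r₂ → δ * r^2 < (μ (Metric.ball x r)).toReal := by
      intro r hr hrr₂
      rcases le_or_gt r η with h | h
      · have hh := hηhalf r hr h
        rw [lt_div_iff₀ (pow_pos hr 2)] at hh
        nlinarith [mul_pos (show (0:ℝ) < π/2 - δ by linarith) (pow_pos hr 2)]
      · have hrT : r ∉ T := notMem_of_lt_csInf hrr₂ hTbdd
        have hrIcc : r ∈ Set.Icc η r₀ := ⟨h.le, le_trans hrr₂.le hr₂r₀⟩
        by_contra hc2'
        push_neg at hc2'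
        exact hrT ⟨hrIcc, by simp [Set.mem_Iic]; linarith⟩
    have hab : η/2 ≤ r₂ := by linarith
    have hsub2 : Set.Icc (η/2) r₂ ⊆ Set.Ioc (0:ℝ) R :=
      fun t ht => ⟨lt_of_lt_of_le (by linarith) ht.1,
        le_trans ht.2 (le_trans hr₂r₀ hr₀.2)⟩
    have key := aux_growth δ (fun t : ℝ => (μ (Metric.ball x t)).toReal) hab
      (hVcont.mono hsub2)
      (by
        intro r hrico
        exact hmono r (lt_of_lt_of_le (by linarith) hrico.1)
          (lt_of_lt_of_le hrico.2 (le_trans hr₂r₀ hr₀.2)))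
      (by
        intro r hrico
        have hr0 : 0 < r := lt_of_lt_of_le (by linarith) hrico.1
        exact hkey r ⟨hr0, le_trans hrico.2.le (le_trans hr₂r₀ hr₀.2)⟩
          (hbelow r hr0 hrico.2).le)
    have hVa : 2*δ*(η/2)^2 < (μ (Metric.ball x (η/2))).toReal := by
      have hh := hηhalf (η/2) (by linarith) (by linarith)
      rw [lt_div_iff₀ (pow_pos (show (0:ℝ) < η/2 by linarith) 2)] at hh
      nlinarith [mul_pos (show (0:ℝ) < π/2 - 2*δ by linarith)
        (pow_pos (show (0:ℝ) < η/2 by linarith) 2)]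
    have hq : 0 < δ * (η/2)^2 := mul_pos hδpos (pow_pos (by linarith) 2)
    linarith
  -- conclude: the infimum is strictly greater than δ
  set S := {v : ℝ | ∃ r ∈ Set.Ioc (0:ℝ) R, v = (μ (Metric.ball x r)).toReal / r ^ 2}
    with hSdef
  have hSne : S.Nonempty := ⟨(μ (Metric.ball x R)).toReal / R^2, R, ⟨hR, le_rfl⟩, rfl⟩
  have hKsub : Set.Icc η R ⊆ Set.Ioc (0:ℝ) R := fun t ht => ⟨lt_of_lt_of_le hη0 ht.1, ht.2⟩
  have hwcont : ContinuousOn (fun r : ℝ => (μ (Metric.ball x r)).toReal / r^2)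
      (Set.Icc η R) := by
    refine (hVcont.mono hKsub).div ((continuous_pow 2).continuousOn) ?_
    intro t ht
    exact pow_ne_zero _ (ne_of_gt (lt_of_lt_of_le hη0 ht.1))
  obtain ⟨rs, hrsK, hrsmin⟩ := (isCompact_Icc :
    IsCompact (Set.Icc η R)).exists_isMinOn ⟨η, ⟨le_rfl, hηR⟩⟩ hwcont
  have hrsIoc : rs ∈ Set.Ioc (0:ℝ) R := hKsub hrsK
  have hm₀ : δ < (μ (Metric.ball x rs)).toReal / rs^2 := by
    rw [lt_div_iff₀ (pow_pos hrsIoc.1 2)]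
    exact hpt rs hrsIoc
  refine lt_of_lt_of_le (show δ < min ((μ (Metric.ball x rs)).toReal / rs^2) (π/2)
    from lt_min hm₀ hδhalf) (le_csInf hSne ?_)
  rintro v ⟨r, hrIoc, rfl⟩
  rcases le_or_gt r η with h | h
  · exact le_trans (min_le_right _ _) (hηhalf r hrIoc.1 h).le
  · exact le_trans (min_le_left _ _) (isMinOn_iff.1 hrsmin r ⟨h.le, hrIoc.2⟩)
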